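/- For every integer m ≥ 2, ∑_{k=-m}^{m} ( [2m-1 choose m-k-1]_q + [2m-1 choose m-k]_q ) · [k]^2 = 4 ([2m-1] + 1) ∏_{j=1}^{m-2} (q^j + q^{-j})^2 in ℚ(q), where the empty product (for m = 2) equals 1, and binomial coefficients with argument outside [0, 2m-1] are interpreted as 0. -/

import Mathlib

noncomputable def q : RatFunc ℚ := RatFunc.X

noncomputable def qint (k : ℤ) : RatFunc ℚ := (q ^ k - q ^ (-k)) / (q - q⁻¹)

noncomputable def qfact (m : ℕ) : RatFunc ℚ := ∏ i ∈ Finset.range m, qint (i + 1)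

noncomputable def qbinom (m : ℕ) (k : ℤ) : RatFunc ℚ :=
  if 0 ≤ k ∧ k ≤ (m : ℤ) then qfact m / (qfact k.toNat * qfact (m - k.toNat)) else 0

lemma hq0 : q ≠ 0 := RatFunc.X_ne_zero

lemma q_pow_ne_one {n : ℕ} (hn : n ≠ 0) : q ^ n ≠ 1 := by
  intro h
  have h2 : (Polynomial.X : Polynomial ℚ) ^ n = 1 := by
    apply IsFractionRing.injective (Polynomial ℚ) (RatFunc ℚ)
    simpa [q, RatFunc.algebraMap_X, map_pow] using h
  have := congrArg Polynomial.natDegree h2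
  simp [Polynomial.natDegree_X_pow] at this
  exact hn this

lemma q_zpow_ne_one {k : ℤ} (hk : k ≠ 0) : q ^ k ≠ 1 := by
  rcases lt_or_gt_of_ne hk with h | h
  · intro he
    have : q ^ (-k) = 1 := by
      rw [zpow_neg]
      simp [he]
    rw [show -k = ((-k).toNat : ℤ) by omega, zpow_natCast] at this
    exact q_pow_ne_one (by omega) this
  · intro he
    rw [show k = (k.toNat : ℤ) by omega, zpow_natCast] at he
    exact q_pow_ne_one (by omega) he

lemma zpadd (a b : ℤ) : q ^ (a + b) = q ^ a * q ^ b := zpow_add₀ hq0 a b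

lemma zpcancel (a : ℤ) : q ^ a * q ^ (-a) = 1 := by
  rw [← zpadd]; simp

lemma hD : q - q⁻¹ ≠ 0 := by
  intro h
  rw [sub_eq_zero] at h
  have h1 : q * q = 1 := by nth_rewrite 1 [h]; exact inv_mul_cancel₀ hq0
  have : q ^ (2:ℤ) = 1 := by
    rw [show (2:ℤ) = (2:ℕ) by norm_num, zpow_natCast, pow_two]; exact h1
  exact q_zpow_ne_one (by norm_num) this

lemma qint_ne_zero {k : ℤ} (hk : k ≠ 0) : qint k ≠ 0 := by
  unfold qint
  apply div_ne_zero _ hD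
  intro h
  rw [sub_eq_zero] at h
  have : q ^ (2*k) = 1 := by
    rw [two_mul, zpadd]; nth_rewrite 1 [h]; rw [← zpadd]; simp
  exact q_zpow_ne_one (by omega) this

lemma qfact_ne_zero (m : ℕ) : qfact m ≠ 0 := by
  unfold qfact
  apply Finset.prod_ne_zero_iff.mpr
  intro i _
  exact qint_ne_zero (by omega)

lemma qfact_zero : qfact 0 = 1 := by simp [qfact]

lemma qfact_succ (n : ℕ) : qfact (n+1) = qfact n * qint ((n:ℤ)+1) :=
  Finset.prod_range_succ _ _

lemma qbinom_zero (n : ℕ) : qbinom n 0 = 1 := by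
  simp [qbinom, qfact_zero, qfact_ne_zero n]

lemma qbinom_self (n : ℕ) : qbinom n (n:ℤ) = 1 := by
  simp [qbinom, qfact_zero, qfact_ne_zero n]

lemma qbinom_neg {n : ℕ} {k : ℤ} (h : k < 0) : qbinom n k = 0 := by
  simp [qbinom]; intro h'; omega

lemma qbinom_gt {n : ℕ} {k : ℤ} (h : (n:ℤ) < k) : qbinom n k = 0 := by
  simp [qbinom]; intro h'; omega

lemma qint_add (a b : ℤ) : qint (a+b) = q^b * qint a + q^(-a) * qint b := by
  unfold qint
  rw [mul_div_assoc', mul_div_assoc', ← add_div]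
  congr 1
  rw [zpadd, neg_add, zpadd]
  ring

lemma qbinom_pascal (n : ℕ) (k : ℤ) :
    qbinom (n+1) k = q^k * qbinom n k + q^(k - (n+1)) * qbinom n (k-1) := by
  rcases lt_trichotomy k 0 with hk | hk | hk
  · rw [qbinom_neg hk, qbinom_neg hk, qbinom_neg (show k-1 < 0 by omega)]; ring
  · subst hk
    rw [qbinom_zero, qbinom_zero, qbinom_neg (show (0:ℤ)-1 < 0 by norm_num)]
    simp
  · by_cases hk2 : k ≤ (n:ℤ)
    · -- main case: 1 ≤ k ≤ n
      obtain ⟨b, rfl⟩ : ∃ b : ℕ, k = (b:ℤ)+1 := ⟨(k-1).toNat, by omega⟩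
      obtain ⟨c, rfl⟩ : ∃ c : ℕ, n = b+1+c := ⟨n-(b+1), by omega⟩
      have ht1 : ((b:ℤ)+1).toNat = b+1 := by omega
      have ht2 : ((b:ℤ)+1-1).toNat = b := by omega
      have e1 : qbinom (b+1+c+1) ((b:ℤ)+1)
          = qfact (b+1+c+1) / (qfact (b+1) * qfact (c+1)) := by
        rw [qbinom, if_pos (by constructor <;> push_cast <;> omega), ht1,
          show b+1+c+1-(b+1) = c+1 by omega]
      have e2 : qbinom (b+1+c) ((b:ℤ)+1)
          = qfact (b+1+c) / (qfact (b+1) * qfact c) := by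
        rw [qbinom, if_pos (by constructor <;> push_cast <;> omega), ht1,
          show b+1+c-(b+1) = c by omega]
      have e3 : qbinom (b+1+c) ((b:ℤ)+1-1)
          = qfact (b+1+c) / (qfact b * qfact (c+1)) := by
        rw [qbinom, if_pos (by constructor <;> push_cast <;> omega), ht2,
          show b+1+c-b = c+1 by omega]
      rw [e1, e2, e3]
      have hx : qint ((b:ℤ)+1+((c:ℤ)+1)) = q^((b:ℤ)+1) * qint ((c:ℤ)+1)
          + (q^((c:ℤ)+1))⁻¹ * qint ((b:ℤ)+1) := by
        rw [show (b:ℤ)+1+((c:ℤ)+1) = ((c:ℤ)+1) + ((b:ℤ)+1) by ring, qint_add, zpow_neg]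
      have hf1 : qfact (b+1+c+1) = qfact (b+1+c) * qint ((b:ℤ)+1+((c:ℤ)+1)) := by
        rw [qfact_succ, show ((b+1+c:ℕ):ℤ)+1 = (b:ℤ)+1+((c:ℤ)+1) by push_cast; ring]
      have hf2 : qfact (b+1) = qfact b * qint ((b:ℤ)+1) := by
        rw [qfact_succ]
      have hf3 : qfact (c+1) = qfact c * qint ((c:ℤ)+1) := by
        rw [qfact_succ]
      have hsplit : q ^ ((b:ℤ) + 1 - (((b+1+c:ℕ):ℤ) + 1)) = (q^((c:ℤ)+1))⁻¹ := by
        rw [show (b:ℤ) + 1 - (((b+1+c:ℕ):ℤ) + 1) = -((c:ℤ)+1) by push_cast; ring, zpow_neg]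
      rw [hf1, hf2, hf3, hx, hsplit]
      have n1 := qfact_ne_zero b
      have n2 := qfact_ne_zero c
      have n3 := qfact_ne_zero (b+1+c)
      have n4 := qint_ne_zero (show (b:ℤ)+1 ≠ 0 by omega)
      have n5 := qint_ne_zero (show (c:ℤ)+1 ≠ 0 by omega)
      have n6 : q^((c:ℤ)+1) ≠ 0 := zpow_ne_zero _ hq0
      rw [mul_div_assoc', mul_div_assoc',
          div_add_div _ _ (mul_ne_zero (mul_ne_zero n1 n4) n2) (mul_ne_zero n1 (mul_ne_zero n2 n5)),
          div_eq_div_iff (mul_ne_zero (mul_ne_zero n1 n4) (mul_ne_zero n2 n5))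
            (mul_ne_zero (mul_ne_zero (mul_ne_zero n1 n4) n2) (mul_ne_zero n1 (mul_ne_zero n2 n5)))]
      field_simp
    · by_cases hk3 : k = (n:ℤ)+1
      · subst hk3
        have h1 : qbinom (n+1) ((n:ℤ)+1) = 1 := by
          rw [show (n:ℤ)+1 = ((n+1:ℕ):ℤ) by push_cast; ring]; exact qbinom_self (n+1)
        rw [h1, qbinom_gt (show (n:ℤ) < (n:ℤ)+1 by omega),
          show (n:ℤ)+1-1 = (n:ℤ) by ring, qbinom_self]
        simp
      · rw [qbinom_gt (show ((n+1:ℕ):ℤ) < k by push_cast; omega),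
            qbinom_gt (show (n:ℤ) < k by omega),
            qbinom_gt (show (n:ℤ) < k-1 by omega)]
        ring

lemma qbinom_gen (n : ℕ) : ∀ t : RatFunc ℚ,
    ∑ j ∈ Finset.range (n+1), qbinom n (j:ℤ) * t^j
      = ∏ i ∈ Finset.range n, (1 + q^(2*(i:ℤ) - (n:ℤ) + 1) * t) := by
  induction n with
  | zero => intro t; simp [qbinom_zero]
  | succ n ih =>
    intro t
    have hs : ∑ j ∈ Finset.range (n+1+1), qbinom (n+1) (j:ℤ) * t^j
        = ∑ j ∈ Finset.range (n+2), (q^(j:ℤ) * qbinom n (j:ℤ) * t^j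
            + q^((j:ℤ) - ((n:ℤ)+1)) * qbinom n ((j:ℤ)-1) * t^j) := by
      apply Finset.sum_congr rfl
      intro j _
      rw [qbinom_pascal]; ring
    rw [hs, Finset.sum_add_distrib]
    have h1 : ∑ j ∈ Finset.range (n+2), q^(j:ℤ) * qbinom n (j:ℤ) * t^j
        = ∑ j ∈ Finset.range (n+1), qbinom n (j:ℤ) * (q*t)^j := by
      rw [Finset.sum_range_succ,
        qbinom_gt (show (n:ℤ) < ((n+1:ℕ):ℤ) by push_cast; omega)]
      simp only [mul_zero, zero_mul, add_zero]
      apply Finset.sum_congr rfl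
      intro j _
      rw [mul_pow, ← zpow_natCast q j]
      ring
    have h2 : ∑ j ∈ Finset.range (n+2), q^((j:ℤ) - ((n:ℤ)+1)) * qbinom n ((j:ℤ)-1) * t^j
        = q^(-(n:ℤ)) * t * ∑ j ∈ Finset.range (n+1), qbinom n (j:ℤ) * (q*t)^j := by
      rw [Finset.sum_range_succ']
      have hz : qbinom n (((0:ℕ):ℤ)-1) = 0 := qbinom_neg (by norm_num)
      rw [hz]
      simp only [mul_zero, zero_mul, add_zero, Finset.mul_sum]
      apply Finset.sum_congr rfl
      intro j _
      rw [show ((j+1:ℕ):ℤ)-1 = (j:ℤ) by push_cast; ring,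
        show ((j+1:ℕ):ℤ) - ((n:ℤ)+1) = -(n:ℤ) + (j:ℤ) by push_cast; ring,
        zpadd, pow_succ, mul_pow, ← zpow_natCast q j]
      ring
    rw [h1, h2, ih (q*t), Finset.prod_range_succ']
    have h3 : ∀ i ∈ Finset.range n,
        1 + q^(2*((i+1:ℕ):ℤ) - ((n+1:ℕ):ℤ) + 1) * t
          = 1 + q^(2*(i:ℤ) - (n:ℤ) + 1) * (q*t) := by
      intro i _
      rw [show 2*((i+1:ℕ):ℤ) - ((n+1:ℕ):ℤ) + 1 = (2*(i:ℤ) - (n:ℤ) + 1) + 1 by push_cast; ring,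
        zpadd, zpow_one]
      ring
    rw [Finset.prod_congr rfl h3,
      show 2*((0:ℕ):ℤ) - ((n+1:ℕ):ℤ) + 1 = -(n:ℤ) by push_cast; ring]
    ring

lemma pair (c : ℤ) : (1 + q^(2*c)) * (1 + q^(-(2*c))) = (q^c + q^(-c))^2 := by
  have h1 : q^(2*c) = q^c * q^c := by rw [two_mul, zpadd]
  have h2 : q^(-(2*c)) = q^(-c) * q^(-c) := by rw [show -(2*c) = -c + -c by ring, zpadd]
  have h3 : q^c * q^(-c) = 1 := zpcancel c
  rw [h1, h2]
  linear_combination (q^c * q^(-c) - 1) * h3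

lemma prodA (m : ℕ) :
    ∏ i ∈ Finset.range (2*m+1), (1 + q^(2*(i:ℤ) - 2*(m:ℤ)))
      = 2 * ∏ j ∈ Finset.Icc 1 m, (q^(j:ℤ) + q^(-(j:ℤ)))^2 := by
  induction m with
  | zero => norm_num
  | succ m ih =>
    rw [Finset.prod_range_succ, show 2*(m+1) = 2*m+1+1 by ring, Finset.prod_range_succ']
    have h3 : ∀ i ∈ Finset.range (2*m+1),
        1 + q^(2*((i+1:ℕ):ℤ) - 2*((m+1:ℕ):ℤ)) = 1 + q^(2*(i:ℤ) - 2*(m:ℤ)) := by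
      intro i _
      rw [show 2*((i+1:ℕ):ℤ) - 2*((m+1:ℕ):ℤ) = 2*(i:ℤ) - 2*(m:ℤ) by push_cast; ring]
    rw [Finset.prod_congr rfl h3, ih,
      show 2*((0:ℕ):ℤ) - 2*((m+1:ℕ):ℤ) = -(2*((m:ℤ)+1)) by push_cast; ring,
      show 2*((2*m+1+1:ℕ):ℤ) - 2*((m+1:ℕ):ℤ) = 2*((m:ℤ)+1) by push_cast; ring,
      Finset.prod_Icc_succ_top (Nat.succ_le_succ (Nat.zero_le m)),
      show ((m+1:ℕ):ℤ) = (m:ℤ)+1 by push_cast; ring,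
      ← pair ((m:ℤ)+1)]
    ring

lemma qcong {a b : ℤ} (h : a = b) : q^a = q^b := by rw [h]

lemma prodB (m : ℕ) :
    ∏ i ∈ Finset.range (2*m+3), (1 + q^(2*(i:ℤ) - 2*(m:ℤ) - 4))
      = (1 + q^(-(2*(m:ℤ))-4)) * (1 + q^(-(2*(m:ℤ))-2))
        * (2 * ∏ j ∈ Finset.Icc 1 m, (q^(j:ℤ) + q^(-(j:ℤ)))^2) := by
  induction m with
  | zero =>
    rw [Finset.prod_range_succ, Finset.prod_range_succ, Finset.prod_range_one]
    norm_num
    try ring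
  | succ m ih =>
    rw [show 2*(m+1)+3 = (2*m+3+1)+1 by ring, Finset.prod_range_succ,
      Finset.prod_range_succ']
    have h3 : ∀ i ∈ Finset.range (2*m+3),
        1 + q^(2*((i+1:ℕ):ℤ) - 2*((m+1:ℕ):ℤ) - 4) = 1 + q^(2*(i:ℤ) - 2*(m:ℤ) - 4) := by
      intro i _
      rw [show 2*((i+1:ℕ):ℤ) - 2*((m+1:ℕ):ℤ) - 4 = 2*(i:ℤ) - 2*(m:ℤ) - 4 by push_cast; ring]
    rw [Finset.prod_congr rfl h3, ih,
      show 2*((0:ℕ):ℤ) - 2*((m+1:ℕ):ℤ) - 4 = -(2*((m:ℤ)+1))-4 by push_cast; ring,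
      show 2*((2*m+3+1:ℕ):ℤ) - 2*((m+1:ℕ):ℤ) - 4 = 2*((m:ℤ)+1) by push_cast; ring,
      show -(2*((m+1:ℕ):ℤ))-4 = -(2*((m:ℤ)+1))-4 by push_cast; ring,
      show -(2*((m+1:ℕ):ℤ))-2 = -(2*(m:ℤ))-4 by push_cast; ring,
      Finset.prod_Icc_succ_top (Nat.succ_le_succ (Nat.zero_le m)),
      show ((m+1:ℕ):ℤ) = (m:ℤ)+1 by push_cast; ring,
      ← pair ((m:ℤ)+1),
      qcong (show -(2*((m:ℤ)+1)) = -(2*(m:ℤ))-2 by ring)]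
    ring

lemma prodC (m : ℕ) :
    ∏ i ∈ Finset.range (2*m+3), (1 + q^(2*(i:ℤ) - 2*(m:ℤ)))
      = (1 + q^(2*(m:ℤ)+4)) * (1 + q^(2*(m:ℤ)+2))
        * (2 * ∏ j ∈ Finset.Icc 1 m, (q^(j:ℤ) + q^(-(j:ℤ)))^2) := by
  induction m with
  | zero =>
    rw [Finset.prod_range_succ, Finset.prod_range_succ, Finset.prod_range_one]
    norm_num
    try ring
  | succ m ih =>
    rw [show 2*(m+1)+3 = (2*m+3+1)+1 by ring, Finset.prod_range_succ,
      Finset.prod_range_succ']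
    have h3 : ∀ i ∈ Finset.range (2*m+3),
        1 + q^(2*((i+1:ℕ):ℤ) - 2*((m+1:ℕ):ℤ)) = 1 + q^(2*(i:ℤ) - 2*(m:ℤ)) := by
      intro i _
      rw [show 2*((i+1:ℕ):ℤ) - 2*((m+1:ℕ):ℤ) = 2*(i:ℤ) - 2*(m:ℤ) by push_cast; ring]
    rw [Finset.prod_congr rfl h3, ih,
      show 2*((0:ℕ):ℤ) - 2*((m+1:ℕ):ℤ) = -(2*((m:ℤ)+1)) by push_cast; ring,
      show 2*((2*m+3+1:ℕ):ℤ) - 2*((m+1:ℕ):ℤ) = 2*(m:ℤ)+6 by push_cast; ring,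
      show 2*((m+1:ℕ):ℤ)+4 = 2*(m:ℤ)+6 by push_cast; ring,
      show 2*((m+1:ℕ):ℤ)+2 = 2*(m:ℤ)+4 by push_cast; ring,
      Finset.prod_Icc_succ_top (Nat.succ_le_succ (Nat.zero_le m)),
      show ((m+1:ℕ):ℤ) = (m:ℤ)+1 by push_cast; ring,
      ← pair ((m:ℤ)+1),
      qcong (show 2*((m:ℤ)+1) = 2*(m:ℤ)+2 by ring)]
    ring

lemma qint_sq (k : ℤ) : qint k ^ 2 = (q^(2*k) + q^(-(2*k)) - 2) / (q-q⁻¹)^2 := by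
  unfold qint
  rw [div_pow]
  congr 1
  rw [show 2*k = k + k by ring, zpadd, show -(k+k) = -k + -k by ring, zpadd]
  linear_combination (-2 : RatFunc ℚ) * zpcancel k

set_option maxHeartbeats 3000000 in
/-- Second moment identity:
`∑_{k=-m}^m ([2m-1 choose m-k-1]_q + [2m-1 choose m-k]_q)[k]² = 4([2m-1]+1)∏_{j=1}^{m-2}(q^j+q^{-j})²`. -/
theorem qbinom_second_moment (m : ℕ) (hm : 2 ≤ m) :
    ∑ k ∈ Finset.Icc (-(m : ℤ)) (m : ℤ),
        (qbinom (2 * m - 1) ((m : ℤ) - k - 1) + qbinom (2 * m - 1) ((m : ℤ) - k)) * qint k ^ 2 =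
      4 * (qint (2 * (m : ℤ) - 1) + 1) *
        ∏ j ∈ Finset.Icc 1 (m - 2), (q ^ (j : ℤ) + q ^ (-(j : ℤ))) ^ 2 := by
  obtain ⟨n, rfl⟩ : ∃ n, m = n + 2 := ⟨m - 2, by omega⟩
  rw [show 2*(n+2)-1 = 2*n+3 by omega, show n+2-2 = n by omega]
  have hset : Finset.Icc (-((n+2:ℕ):ℤ)) ((n+2:ℕ):ℤ)
      = Finset.map ⟨fun j : ℕ => ((n+2:ℕ):ℤ) - j, show Function.Injective (fun j : ℕ => ((n+2:ℕ):ℤ) - j) from fun a b h => by simpa using h⟩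
          (Finset.range (2*n+5)) := by
    ext k
    simp only [Finset.mem_Icc, Finset.mem_map, Finset.mem_range,
      Function.Embedding.coeFn_mk]
    constructor
    · intro h; exact ⟨(((n+2:ℕ):ℤ) - k).toNat, by omega, by omega⟩
    · rintro ⟨j, hj, rfl⟩; omega
  rw [hset, Finset.sum_map]
  simp only [Function.Embedding.coeFn_mk]
  have hterm : ∀ j ∈ Finset.range (2*n+5),
      (qbinom (2*n+3) (((n+2:ℕ):ℤ) - (((n+2:ℕ):ℤ) - (j:ℤ)) - 1)
        + qbinom (2*n+3) (((n+2:ℕ):ℤ) - (((n+2:ℕ):ℤ) - (j:ℤ)))) * qint (((n+2:ℕ):ℤ) - (j:ℤ))^2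
      = (q^(2*(n:ℤ)+4) * (qbinom (2*n+3) ((j:ℤ)-1) * (q^(-2:ℤ))^j)
       + q^(2*(n:ℤ)+4) * (qbinom (2*n+3) (j:ℤ) * (q^(-2:ℤ))^j)
       + (q^(-(2*(n:ℤ))-4) * (qbinom (2*n+3) ((j:ℤ)-1) * (q^(2:ℤ))^j)
       + q^(-(2*(n:ℤ))-4) * (qbinom (2*n+3) (j:ℤ) * (q^(2:ℤ))^j))
       - (2 * (qbinom (2*n+3) ((j:ℤ)-1) * (1:RatFunc ℚ)^j)
       + 2 * (qbinom (2*n+3) (j:ℤ) * (1:RatFunc ℚ)^j))) / (q - q⁻¹)^2 := by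
    intro j _
    rw [show ((n+2:ℕ):ℤ) - (((n+2:ℕ):ℤ) - (j:ℤ)) - 1 = (j:ℤ)-1 by ring,
      show ((n+2:ℕ):ℤ) - (((n+2:ℕ):ℤ) - (j:ℤ)) = (j:ℤ) by ring,
      qint_sq,
      show 2*(((n+2:ℕ):ℤ) - (j:ℤ)) = (2*(n:ℤ)+4) + (-2)*(j:ℤ) by push_cast; ring,
      zpow_add₀ hq0 (2*(n:ℤ)+4) ((-2)*(j:ℤ)),
      show -((2*(n:ℤ)+4) + (-2)*(j:ℤ)) = (-(2*(n:ℤ))-4) + 2*(j:ℤ) by ring,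
      zpow_add₀ hq0 (-(2*(n:ℤ))-4) (2*(j:ℤ)),
      show q^((-2)*(j:ℤ)) = (q^(-2:ℤ))^j by rw [zpow_mul, zpow_natCast],
      show q^(2*(j:ℤ)) = (q^(2:ℤ))^j by rw [zpow_mul, zpow_natCast],
      ← mul_div_assoc]
    congr 1
    simp only [one_pow]
    ring
  rw [Finset.sum_congr rfl hterm, ← Finset.sum_div,
    div_eq_iff (pow_ne_zero 2 hD)]
  simp only [Finset.sum_add_distrib, Finset.sum_sub_distrib, ← Finset.mul_sum]
  have hSb : ∀ t : RatFunc ℚ, ∑ j ∈ Finset.range (2*n+5), qbinom (2*n+3) (j:ℤ) * t^j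
      = ∑ j ∈ Finset.range (2*n+3+1), qbinom (2*n+3) (j:ℤ) * t^j := by
    intro t
    rw [show 2*n+5 = (2*n+3+1)+1 by ring, Finset.sum_range_succ,
      qbinom_gt (show ((2*n+3:ℕ):ℤ) < ((2*n+3+1:ℕ):ℤ) by push_cast; omega),
      zero_mul, add_zero]
  have hSa : ∀ t : RatFunc ℚ, ∑ j ∈ Finset.range (2*n+5), qbinom (2*n+3) ((j:ℤ)-1) * t^j
      = t * ∑ j ∈ Finset.range (2*n+3+1), qbinom (2*n+3) (j:ℤ) * t^j := by
    intro t
    rw [show 2*n+5 = (2*n+4)+1 by ring, Finset.sum_range_succ',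
      qbinom_neg (show ((0:ℕ):ℤ)-1 < 0 by norm_num),
      zero_mul, add_zero, Finset.mul_sum]
    apply Finset.sum_congr (by norm_num)
    intro j _
    rw [show ((j+1:ℕ):ℤ)-1 = (j:ℤ) by push_cast; ring, pow_succ]
    ring
  simp only [hSa, hSb, qbinom_gen (2*n+3)]
  have hG1 : ∏ i ∈ Finset.range (2*n+3), (1 + q^(2*(i:ℤ) - ((2*n+3:ℕ):ℤ) + 1) * q^(-2:ℤ))
      = (1 + q^(-(2*(n:ℤ))-4)) * (1 + q^(-(2*(n:ℤ))-2))
        * (2 * ∏ j ∈ Finset.Icc 1 n, (q^(j:ℤ) + q^(-(j:ℤ)))^2) := by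
    have h : ∀ i ∈ Finset.range (2*n+3),
        1 + q^(2*(i:ℤ) - ((2*n+3:ℕ):ℤ) + 1) * q^(-2:ℤ) = 1 + q^(2*(i:ℤ) - 2*(n:ℤ) - 4) := by
      intro i _
      rw [← zpadd, show 2*(i:ℤ) - ((2*n+3:ℕ):ℤ) + 1 + (-2) = 2*(i:ℤ) - 2*(n:ℤ) - 4 by push_cast; ring]
    rw [Finset.prod_congr rfl h, prodB n]
  have hG2 : ∏ i ∈ Finset.range (2*n+3), (1 + q^(2*(i:ℤ) - ((2*n+3:ℕ):ℤ) + 1) * q^(2:ℤ))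
      = (1 + q^(2*(n:ℤ)+4)) * (1 + q^(2*(n:ℤ)+2))
        * (2 * ∏ j ∈ Finset.Icc 1 n, (q^(j:ℤ) + q^(-(j:ℤ)))^2) := by
    have h : ∀ i ∈ Finset.range (2*n+3),
        1 + q^(2*(i:ℤ) - ((2*n+3:ℕ):ℤ) + 1) * q^(2:ℤ) = 1 + q^(2*(i:ℤ) - 2*(n:ℤ)) := by
      intro i _
      rw [← zpadd, show 2*(i:ℤ) - ((2*n+3:ℕ):ℤ) + 1 + 2 = 2*(i:ℤ) - 2*(n:ℤ) by push_cast; ring]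
    rw [Finset.prod_congr rfl h, prodC n]
  have hG3 : ∏ i ∈ Finset.range (2*n+3), (1 + q^(2*(i:ℤ) - ((2*n+3:ℕ):ℤ) + 1) * (1:RatFunc ℚ))
      = 2 * ((∏ j ∈ Finset.Icc 1 n, (q^(j:ℤ) + q^(-(j:ℤ)))^2)
          * (q^((n:ℤ)+1) + q^(-((n:ℤ)+1)))^2) := by
    have h : ∀ i ∈ Finset.range (2*n+3),
        1 + q^(2*(i:ℤ) - ((2*n+3:ℕ):ℤ) + 1) * (1:RatFunc ℚ)
          = 1 + q^(2*(i:ℤ) - 2*((n+1:ℕ):ℤ)) := by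
      intro i _
      rw [mul_one, show 2*(i:ℤ) - ((2*n+3:ℕ):ℤ) + 1 = 2*(i:ℤ) - 2*((n+1:ℕ):ℤ) by push_cast; ring]
    rw [Finset.prod_congr rfl h, show 2*n+3 = 2*(n+1)+1 by ring, prodA (n+1),
      Finset.prod_Icc_succ_top (Nat.succ_le_succ (Nat.zero_le n)),
      show ((n+1:ℕ):ℤ) = (n:ℤ)+1 by push_cast; ring]
  rw [hG1, hG2, hG3]
  set P := ∏ j ∈ Finset.Icc 1 n, (q^(j:ℤ) + q^(-(j:ℤ)))^2 with hP
  have hqi : qint (2*((n+2:ℕ):ℤ)-1) = (q^(2*(n:ℤ)+3) - q^(-(2*(n:ℤ))-3))/(q - q⁻¹) := by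
    unfold qint
    rw [show 2*((n+2:ℕ):ℤ)-1 = 2*(n:ℤ)+3 by push_cast; ring,
      show -(2*(n:ℤ)+3) = -(2*(n:ℤ))-3 by ring]
  have hred : ∀ X : RatFunc ℚ, 4 * (X/(q-q⁻¹) + 1) * P * (q-q⁻¹)^2
      = 4 * (X + (q-q⁻¹)) * P * (q-q⁻¹) := by
    intro X
    have h := div_mul_cancel₀ X hD
    linear_combination (4*P*(q-q⁻¹)) * h
  rw [hqi, hred]
  set u := q^((n:ℤ)+1) with hu_def
  have hu : u ≠ 0 := zpow_ne_zero _ hq0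
  have e0 : q^(-((n:ℤ)+1)) = u⁻¹ := by rw [zpow_neg, hu_def]
  have zp : ∀ a b : ℤ, q^(a+b) = q^a * q^b := fun a b => zpow_add₀ hq0 a b
  have e1 : q^(2*(n:ℤ)+4) = u*u*(q*q) := by
    rw [hu_def, show 2*(n:ℤ)+4 = (((n:ℤ)+1)+((n:ℤ)+1))+(1+1) by ring,
      zp (((n:ℤ)+1)+((n:ℤ)+1)) (1+1), zp ((n:ℤ)+1) ((n:ℤ)+1), zp 1 1, zpow_one]
  have e2 : q^(-2:ℤ) = q⁻¹*q⁻¹ := by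
    rw [show (-2:ℤ) = (-1) + (-1) by norm_num, zp (-1) (-1), zpow_neg_one]
  have e3 : q^(-(2*(n:ℤ))-4) = u⁻¹*u⁻¹*(q⁻¹*q⁻¹) := by
    rw [show -(2*(n:ℤ))-4 = (-((n:ℤ)+1)) + (-((n:ℤ)+1)) + ((-1) + (-1)) by ring,
      zp ((-((n:ℤ)+1)) + (-((n:ℤ)+1))) ((-1)+(-1)), zp (-((n:ℤ)+1)) (-((n:ℤ)+1)),
      zp (-1) (-1), zpow_neg_one, e0]
  have e4 : q^(2:ℤ) = q*q := by
    rw [show (2:ℤ) = 1+1 by norm_num, zp 1 1, zpow_one]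
  have e5 : q^(-(2*(n:ℤ))-2) = u⁻¹*u⁻¹ := by
    rw [show -(2*(n:ℤ))-2 = (-((n:ℤ)+1)) + (-((n:ℤ)+1)) by ring,
      zp (-((n:ℤ)+1)) (-((n:ℤ)+1)), e0]
  have e6 : q^(2*(n:ℤ)+2) = u*u := by
    rw [hu_def, show 2*(n:ℤ)+2 = ((n:ℤ)+1)+((n:ℤ)+1) by ring, zp ((n:ℤ)+1) ((n:ℤ)+1)]
  have e7 : q^(2*(n:ℤ)+3) = u*u*q := by
    rw [hu_def, show 2*(n:ℤ)+3 = (((n:ℤ)+1)+((n:ℤ)+1))+1 by ring,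
      zp (((n:ℤ)+1)+((n:ℤ)+1)) 1, zp ((n:ℤ)+1) ((n:ℤ)+1), zpow_one]
  have e8 : q^(-(2*(n:ℤ))-3 ) = u⁻¹*u⁻¹*q⁻¹ := by
    rw [show -(2*(n:ℤ))-3 = ((-((n:ℤ)+1)) + (-((n:ℤ)+1))) + (-1) by ring,
      zp ((-((n:ℤ)+1)) + (-((n:ℤ)+1))) (-1), zp (-((n:ℤ)+1)) (-((n:ℤ)+1)),
      zpow_neg_one, e0]
  rw [e0, e1, e2, e3, e4, e5, e6, e7, e8]
  have hq1 : q * q⁻¹ = 1 := mul_inv_cancel₀ hq0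
  have hu1 : u * u⁻¹ = 1 := mul_inv_cancel₀ hu
  field_simp [hu, hq0]
  ring
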